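/- arXiv:2505.06142 — 12 statements merged into one kernel-verified Lean document; each statement's English description precedes it below -/
import Mathlib

section
/- Let u : ℝ → H be differentiable with i·u'(t) = A(u(t)) + B(f(t)) for all t ∈ [0,T] and u(0) = 0, and let v : ℝ → H be differentiable with i·v'(t) = −A*(v(t)) − B(g(t)) for all t ∈ [0,T] and v(0) = 0, where f, g : ℝ → Y are continuous. Then ∫₀ᵀ ⟨B*(u(T−t)), g(t)⟩_Y dt = ∫₀ᵀ ⟨f(T−t), B*(v(t))⟩_Y dt. (This is the identity (R_#ᵀ)* Jᵀ = Jᵀ Rᵀ between the response operators of the forward system i u_t − A u = B f and the adjoint system i v_t + A* v = −B g, where Jᵀ is time reversal on [0,T].) -/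
/-- The identity `(R_#ᵀ)* Jᵀ = Jᵀ Rᵀ` between the response operators of the
forward system `i u_t − A u = B f` and the adjoint system `i v_t + A* v = −B g`,
where `Jᵀ` is time reversal on `[0,T]`.
The paper's inner product `⟨a, b⟩` (linear in the first argument) is rendered as
Mathlib's `inner b a` (which is linear in the second argument). -/
theorem stmt_0 {H Y : Type*}
    [NormedAddCommGroup H] [InnerProductSpace ℂ H] [CompleteSpace H]
    [NormedAddCommGroup Y] [InnerProductSpace ℂ Y] [CompleteSpace Y]
    (A : H →L[ℂ] H) (B : Y →L[ℂ] H) (T : ℝ) (hT : 0 < T)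
    (f g : ℝ → Y) (hf : Continuous f) (hg : Continuous g)
    (u v : ℝ → H) (hu : Differentiable ℝ u) (hv : Differentiable ℝ v)
    (hueq : ∀ t ∈ Set.Icc (0 : ℝ) T,
      Complex.I • deriv u t = A (u t) + B (f t))
    (hu0 : u 0 = 0)
    (hveq : ∀ t ∈ Set.Icc (0 : ℝ) T,
      Complex.I • deriv v t = -((ContinuousLinearMap.adjoint A) (v t)) - B (g t))
    (hv0 : v 0 = 0) :
    ∫ t in (0 : ℝ)..T, (inner ℂ (g t) ((ContinuousLinearMap.adjoint B) (u (T - t))) : ℂ) =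
      ∫ t in (0 : ℝ)..T, (inner ℂ ((ContinuousLinearMap.adjoint B) (v t)) (f (T - t)) : ℂ) := by
  have huc : Continuous u := hu.continuous
  have hvc : Continuous v := hv.continuous
  have hus : Continuous (fun t : ℝ => u (T - t)) :=
    huc.comp (continuous_const.sub continuous_id)
  have hfs : Continuous (fun t : ℝ => f (T - t)) :=
    hf.comp (continuous_const.sub continuous_id)
  set φ : ℝ → ℂ := fun t => inner ℂ (v t) (u (T - t)) with hφ
  have hG : Continuous (fun t : ℝ => (inner ℂ (v t) (B (f (T - t))) : ℂ)) :=
    hvc.inner (B.continuous.comp hfs)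
  have hF : Continuous (fun t : ℝ => (inner ℂ (B (g t)) (u (T - t)) : ℂ)) :=
    (B.continuous.comp hg).inner hus
  set D : ℝ → ℂ := fun t =>
    Complex.I * (inner ℂ (v t) (B (f (T - t))) : ℂ)
      - Complex.I * (inner ℂ (B (g t)) (u (T - t)) : ℂ) with hD
  have hDc : Continuous D := ((continuous_const.mul hG).sub (continuous_const.mul hF))
  have key : ∀ t ∈ Set.uIcc (0 : ℝ) T, HasDerivAt φ (D t) t := by
    intro t ht
    rw [Set.uIcc_of_le hT.le] at ht
    have ht' : T - t ∈ Set.Icc (0 : ℝ) T := ⟨by linarith [ht.2], by linarith [ht.1]⟩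
    have hdu : deriv u (T - t) = (-Complex.I) • (A (u (T - t)) + B (f (T - t))) := by
      have h := hueq (T - t) ht'
      have := congrArg (fun x => (-Complex.I) • x) h
      simpa [smul_smul, Complex.I_mul_I] using this
    have hdv : deriv v t = Complex.I • ((ContinuousLinearMap.adjoint A) (v t) + B (g t)) := by
      have h := hveq t ht
      have := congrArg (fun x => (-Complex.I) • x) h
      simp only [smul_smul] at this
      rw [neg_mul, Complex.I_mul_I, neg_neg, one_smul] at this
      rw [this]
      simp [smul_sub, smul_add, smul_neg, sub_eq_add_neg]
    have hv' : HasDerivAt v (deriv v t) t := (hv t).hasDerivAt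
    have hu' : HasDerivAt (fun s : ℝ => u (T - s)) ((-1 : ℝ) • deriv u (T - t)) t := by
      have hi : HasDerivAt (fun s : ℝ => T - s) (-1 : ℝ) t := by
        simpa using (hasDerivAt_id t).const_sub T
      exact (hu (T - t)).hasDerivAt.scomp t hi
    have := hv'.inner ℂ hu'
    refine this.congr_deriv ?_
    rw [hdu, hdv]
    simp only [inner_smul_left, inner_smul_right, inner_add_left, inner_add_right,
      inner_neg_right, neg_one_smul, smul_neg, smul_add, Complex.conj_I,
      ContinuousLinearMap.adjoint_inner_left, map_neg, hD]
    ring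
  have hint : ∫ t in (0 : ℝ)..T, D t = φ T - φ 0 :=
    intervalIntegral.integral_eq_sub_of_hasDerivAt key (hDc.intervalIntegrable 0 T)
  have hφT : φ T = 0 := by simp [hφ, hu0]
  have hφ0 : φ 0 = 0 := by simp [hφ, hv0]
  rw [hφT, hφ0, sub_zero] at hint
  have hsplit : ∫ t in (0 : ℝ)..T, D t =
      Complex.I * (∫ t in (0 : ℝ)..T, (inner ℂ (v t) (B (f (T - t))) : ℂ))
        - Complex.I * (∫ t in (0 : ℝ)..T, (inner ℂ (B (g t)) (u (T - t)) : ℂ)) := by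
    rw [hD]; beta_reduce
    rw [intervalIntegral.integral_sub ((show Continuous fun t => Complex.I * (inner ℂ (v t) (B (f (T - t))) : ℂ) from continuous_const.mul hG).intervalIntegrable 0 T)
      ((show Continuous fun t => Complex.I * (inner ℂ (B (g t)) (u (T - t)) : ℂ) from continuous_const.mul hF).intervalIntegrable 0 T),
      intervalIntegral.integral_const_mul, intervalIntegral.integral_const_mul]
  rw [hsplit] at hint
  have hmain : (∫ t in (0 : ℝ)..T, (inner ℂ (B (g t)) (u (T - t)) : ℂ)) =
      ∫ t in (0 : ℝ)..T, (inner ℂ (v t) (B (f (T - t))) : ℂ) := by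
    have h2 : Complex.I * ((∫ t in (0 : ℝ)..T, (inner ℂ (v t) (B (f (T - t))) : ℂ))
        - (∫ t in (0 : ℝ)..T, (inner ℂ (B (g t)) (u (T - t)) : ℂ))) = 0 := by
      rw [mul_sub]; exact hint
    have := mul_eq_zero.mp h2
    rcases this with h | h
    · exact absurd h Complex.I_ne_zero
    · linear_combination -h
  calc ∫ t in (0 : ℝ)..T, (inner ℂ (g t) ((ContinuousLinearMap.adjoint B) (u (T - t))) : ℂ)
      = ∫ t in (0 : ℝ)..T, (inner ℂ (B (g t)) (u (T - t)) : ℂ) := by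
        simp_rw [ContinuousLinearMap.adjoint_inner_right]
    _ = ∫ t in (0 : ℝ)..T, (inner ℂ (v t) (B (f (T - t))) : ℂ) := hmain
    _ = ∫ t in (0 : ℝ)..T, (inner ℂ ((ContinuousLinearMap.adjoint B) (v t)) (f (T - t)) : ℂ) := by
        simp_rw [ContinuousLinearMap.adjoint_inner_left]
end

section
/- Let f, g : ℝ → Y be continuous with f(t) = 0 for t > T. Let u : ℝ → H be differentiable with i·u'(t) = A(u(t)) + B(f(t)) for t ∈ [0,2T] and u(0) = 0, and let v : ℝ → H be differentiable with i·v'(t) = −A*(v(t)) − B(g(t)) for t ∈ [0,T] and v(0) = 0. Then ⟨u(T), v(T)⟩_H = −i ∫₀ᵀ ⟨B*(u(2T−η)), g(η)⟩_Y dη. (This is the representation Cᵀ = −i (Zᵀ)* J²ᵀ R²ᵀ Zᵀ of the connecting operator Cᵀ, defined by ⟨Cᵀ f, g⟩ = ⟨u^f(T), v^g(T)⟩_H, in terms of the response operator R²ᵀ on the doubled time interval.) -/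
set_option maxHeartbeats 1000000

open MeasureTheory

/-- the representation `Cᵀ = −i (Zᵀ)* J²ᵀ R²ᵀ Zᵀ` of the connecting operator,
`⟨u^f(T), v^g(T)⟩_H = −i ∫₀ᵀ ⟨B*(u(2T−η)), g(η)⟩_Y dη`.
The paper's inner product `⟨a, b⟩` (linear in the first argument) is rendered as
Mathlib's `inner b a`. -/
theorem stmt_2 {H Y : Type*}
    [NormedAddCommGroup H] [InnerProductSpace ℂ H] [CompleteSpace H]
    [NormedAddCommGroup Y] [InnerProductSpace ℂ Y] [CompleteSpace Y]
    (A : H →L[ℂ] H) (B : Y →L[ℂ] H) (T : ℝ) (hT : 0 < T)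
    (f g : ℝ → Y) (hf : Continuous f) (hg : Continuous g)
    (hfT : ∀ t : ℝ, T < t → f t = 0)
    (u v : ℝ → H) (hu : Differentiable ℝ u) (hv : Differentiable ℝ v)
    (hueq : ∀ t ∈ Set.Icc (0 : ℝ) (2 * T),
      Complex.I • deriv u t = A (u t) + B (f t))
    (hu0 : u 0 = 0)
    (hveq : ∀ t ∈ Set.Icc (0 : ℝ) T,
      Complex.I • deriv v t = -((ContinuousLinearMap.adjoint A) (v t)) - B (g t))
    (hv0 : v 0 = 0) :
    (inner ℂ (v T) (u T) : ℂ) =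
      -Complex.I *
        ∫ η in (0 : ℝ)..T,
          (inner ℂ (g η) ((ContinuousLinearMap.adjoint B) (u (2 * T - η))) : ℂ) := by
  set A' := ContinuousLinearMap.adjoint A with hA'
  set B' := ContinuousLinearMap.adjoint B with hB'
  have hcu : Continuous u := hu.continuous
  have hcv : Continuous v := hv.continuous
  -- solve for derivatives
  have hu' : ∀ s ∈ Set.Icc (0:ℝ) (2*T),
      deriv u s = (-Complex.I) • (A (u s) + B (f s)) := by
    intro s hs
    have h := hueq s hs
    have h2 := congrArg (fun x => (-Complex.I) • x) h
    simp only [smul_smul, neg_mul, Complex.I_mul_I, neg_neg, one_smul] at h2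
    exact h2
  have hv' : ∀ t ∈ Set.Icc (0:ℝ) T,
      deriv v t = (-Complex.I) • (-(A' (v t)) - B (g t)) := by
    intro t ht
    have h := hveq t ht
    have h2 := congrArg (fun x => (-Complex.I) • x) h
    simp only [smul_smul, neg_mul, Complex.I_mul_I, neg_neg, one_smul] at h2
    exact h2
  set F : ℝ → ℂ := fun t => (inner ℂ (v t) (u (2*T - t)) : ℂ) with hF
  set φ : ℝ → ℂ := fun t =>
      -Complex.I * (inner ℂ (g t) (B' (u (2*T - t))) : ℂ)
      + Complex.I * (inner ℂ (v t) (B (f (2*T - t))) : ℂ) with hφ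
  have hcφ : Continuous φ := by
    apply Continuous.add
    · exact continuous_const.mul (Continuous.inner hg (B'.continuous.comp
        (hcu.comp (continuous_const.sub continuous_id))))
    · exact continuous_const.mul (Continuous.inner hcv (B.continuous.comp
        (hf.comp (continuous_const.sub continuous_id))))
  have key : ∀ t ∈ Set.uIcc (0:ℝ) T, HasDerivAt F (φ t) t := by
    intro t ht
    rw [Set.uIcc_of_le hT.le] at ht
    obtain ⟨ht0, htT⟩ := ht
    have hst : (2*T - t) ∈ Set.Icc (0:ℝ) (2*T) := ⟨by linarith, by linarith⟩
    have hdu : HasDerivAt (fun t => u (2*T - t)) (-deriv u (2*T - t)) t := by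
      have h1 : HasDerivAt u (deriv u (2*T - t)) (2*T - t) := (hu _).hasDerivAt
      have h2 : HasDerivAt (fun t : ℝ => 2*T - t) (-1) t := by
        simpa using (hasDerivAt_id' t).const_sub (2*T)
      have h3 := h1.scomp t h2
      simp only [neg_smul, one_smul] at h3
      exact h3
    have hdv : HasDerivAt v (deriv v t) t := (hv t).hasDerivAt
    have hD := hdv.inner ℂ hdu
    have hval : (inner ℂ (v t) (-deriv u (2*T - t)) : ℂ)
        + (inner ℂ (deriv v t) (u (2*T - t)) : ℂ) = φ t := by
      rw [hu' _ hst, hv' _ ⟨ht0, htT⟩]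
      simp only [inner_neg_right, inner_smul_right, inner_smul_left, inner_add_right,
        inner_sub_left, inner_neg_left, inner_sub_right, inner_add_left, map_neg,
        Complex.conj_I, hφ]
      have e1 : (inner ℂ (A' (v t)) (u (2*T - t)) : ℂ)
          = inner ℂ (v t) (A (u (2*T - t))) := by
        rw [hA']; exact ContinuousLinearMap.adjoint_inner_left A (u (2*T - t)) (v t)
      have e2 : (inner ℂ (B (g t)) (u (2*T - t)) : ℂ)
          = inner ℂ (g t) (B' (u (2*T - t))) := by
        rw [hB']; exact (ContinuousLinearMap.adjoint_inner_right B (g t) (u (2*T - t))).symm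
      rw [e1, e2]
      ring
    rw [← hval]
    exact hD
  have hic : IntervalIntegrable φ volume 0 T := hcφ.intervalIntegrable 0 T
  have hFTC : ∫ t in (0:ℝ)..T, φ t = F T - F 0 :=
    intervalIntegral.integral_eq_sub_of_hasDerivAt key hic
  have hF0 : F 0 = 0 := by simp [hF, hv0]
  have hFT : F T = (inner ℂ (v T) (u T) : ℂ) := by
    have h2T : 2*T - T = T := by ring
    simp [hF, h2T]
  -- split integral
  have hic1 : IntervalIntegrable
      (fun t => -Complex.I * (inner ℂ (g t) (B' (u (2*T - t))) : ℂ)) volume 0 T := by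
    apply Continuous.intervalIntegrable
    exact continuous_const.mul (Continuous.inner hg (B'.continuous.comp
      (hcu.comp (continuous_const.sub continuous_id))))
  have hic2 : IntervalIntegrable
      (fun t => Complex.I * (inner ℂ (v t) (B (f (2*T - t))) : ℂ)) volume 0 T := by
    apply Continuous.intervalIntegrable
    exact continuous_const.mul (Continuous.inner hcv (B.continuous.comp
      (hf.comp (continuous_const.sub continuous_id))))
  have hsplit : ∫ t in (0:ℝ)..T, φ t
      = (∫ t in (0:ℝ)..T, -Complex.I * (inner ℂ (g t) (B' (u (2*T - t))) : ℂ))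
      + ∫ t in (0:ℝ)..T, Complex.I * (inner ℂ (v t) (B (f (2*T - t))) : ℂ) :=
    intervalIntegral.integral_add hic1 hic2
  have hzero : (∫ t in (0:ℝ)..T, Complex.I * (inner ℂ (v t) (B (f (2*T - t))) : ℂ)) = 0 := by
    have hne : ∀ᵐ t : ℝ, t ≠ T := by
      rw [MeasureTheory.ae_iff]
      have : {t : ℝ | ¬ t ≠ T} = {T} := by ext t; simp
      rw [this]
      exact Real.volume_singleton
    have hcongr : ∀ᵐ t : ℝ, t ∈ Set.uIoc (0:ℝ) T →
        Complex.I * (inner ℂ (v t) (B (f (2*T - t))) : ℂ) = 0 := by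
      filter_upwards [hne] with t hne ht
      rw [Set.uIoc_of_le hT.le] at ht
      have hlt : T < 2*T - t := by
        have := lt_of_le_of_ne ht.2 hne
        linarith
      rw [hfT _ hlt]
      simp
    rw [intervalIntegral.integral_congr_ae hcongr]
    simp
  have hconst : (∫ t in (0:ℝ)..T, -Complex.I * (inner ℂ (g t) (B' (u (2*T - t))) : ℂ))
      = -Complex.I * ∫ t in (0:ℝ)..T, (inner ℂ (g t) (B' (u (2*T - t))) : ℂ) :=
    intervalIntegral.integral_const_mul _ _
  rw [← hFT]
  rw [hF0, sub_zero] at hFTC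
  rw [← hFTC, hsplit, hzero, add_zero, hconst]
end

section
/- Let f : ℝ → Y be continuously differentiable with f(0) = 0. Let u : ℝ → H be differentiable with i·u'(t) = A(u(t)) + B(f(t)) for all t and u(0) = 0, and let w : ℝ → H be differentiable with i·w'(t) = A(w(t)) + B(f'(t)) for all t and w(0) = 0. Then w(t) = u'(t) for all t ≥ 0. (In control-theoretic notation: u^{df/dt} = (d/dt) u^{f} whenever f(0) = 0.) -/
/-- `u^{df/dt} = (d/dt) u^{f}` whenever `f(0) = 0`. -/
theorem stmt_3 {H Y : Type*}
    [NormedAddCommGroup H] [NormedSpace ℂ H]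
    [NormedAddCommGroup Y] [NormedSpace ℂ Y]
    (A : H →L[ℂ] H) (B : Y →L[ℂ] H)
    (f : ℝ → Y) (hf : ContDiff ℝ 1 f) (hf0 : f 0 = 0)
    (u w : ℝ → H) (hu : Differentiable ℝ u) (hw : Differentiable ℝ w)
    (hueq : ∀ t : ℝ, Complex.I • deriv u t = A (u t) + B (f t))
    (hu0 : u 0 = 0)
    (hweq : ∀ t : ℝ, Complex.I • deriv w t = A (w t) + B (deriv f t))
    (hw0 : w 0 = 0) :
    ∀ t : ℝ, 0 ≤ t → w t = deriv u t := by
  have hfd : Differentiable ℝ f := hf.differentiable one_ne_zero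
  -- solve for deriv u
  have hIJ : ∀ x : H, (-Complex.I) • (Complex.I • x) = x := by
    intro x
    rw [smul_smul]
    simp
  have hdu : ∀ t : ℝ, deriv u t = (-Complex.I) • (A (u t) + B (f t)) := by
    intro t
    rw [← hueq t, hIJ]
  have hdw : ∀ t : ℝ, deriv w t = (-Complex.I) • (A (w t) + B (deriv f t)) := by
    intro t
    rw [← hweq t, hIJ]
  -- the vector field
  set v : ℝ → H → H := fun t x => (-Complex.I) • (A x + B (deriv f t)) with hv
  have hlip : ∀ t : ℝ, LipschitzWith ‖A‖₊ (v t) := by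
    intro t
    apply LipschitzWith.of_dist_le_mul
    intro x y
    simp only [hv, dist_eq_norm, ← smul_sub, add_sub_add_right_eq_sub, ← map_sub]
    rw [norm_smul]
    simp only [norm_neg, Complex.norm_I, one_mul]
    exact A.le_opNorm _
  -- deriv u satisfies the ODE
  have hdu2 : ∀ t : ℝ, HasDerivAt (deriv u) (v t (deriv u t)) t := by
    intro t
    have ha : HasDerivAt (fun s => A (u s)) (A (deriv u t)) t :=
      (A.restrictScalars ℝ).hasFDerivAt.comp_hasDerivAt t (hu t).hasDerivAt
    have hb : HasDerivAt (fun s => B (f s)) (B (deriv f t)) t :=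
      (B.restrictScalars ℝ).hasFDerivAt.comp_hasDerivAt t (hfd t).hasDerivAt
    have h1 : HasDerivAt (fun s => (-Complex.I) • (A (u s) + B (f s)))
        ((-Complex.I) • (A (deriv u t) + B (deriv f t))) t :=
      (ha.add hb).const_smul (-Complex.I)
    have h2 : HasDerivAt (deriv u) ((-Complex.I) • (A (deriv u t) + B (deriv f t))) t :=
      h1.congr_of_eventuallyEq (Filter.Eventually.of_forall hdu)
    simpa [hv] using h2
  have hdw2 : ∀ t : ℝ, HasDerivAt w (v t (w t)) t := by
    intro t
    have := (hw t).hasDerivAt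
    rwa [hdw t] at this
  -- continuity
  have hcu : Continuous (deriv u) := by
    have : deriv u = fun s => (-Complex.I) • (A (u s) + B (f s)) := funext hdu
    rw [this]
    exact ((A.continuous.comp hu.continuous).add (B.continuous.comp hfd.continuous)).const_smul _
  -- initial values
  have h0 : w 0 = deriv u 0 := by
    rw [hw0, hdu 0, hu0, hf0]
    simp
  intro t ht
  have := ODE_solution_unique (E := H) (v := v) (K := ‖A‖₊) (f := w) (g := deriv u)
    (a := 0) (b := t) hlip (hw.continuous.continuousOn)
    (fun s _ => (hdw2 s).hasDerivWithinAt) (hcu.continuousOn)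
    (fun s _ => (hdu2 s).hasDerivWithinAt) h0
  exact this (Set.right_mem_Icc.mpr ht)
end

section
/- Let f : ℝ → Y be continuously differentiable with f(0) = 0 and f(T) = 0. Let u : ℝ → H be differentiable with i·u'(t) = A(u(t)) + B(f(t)) for all t and u(0) = 0, and let w : ℝ → H be differentiable with i·w'(t) = A(w(t)) + B(f'(t)) for all t and w(0) = 0. Assume that u(T) is an eigenvector of A: A(u(T)) = λ·u(T) for some λ ∈ ℂ. Then w(T) = −i·λ·u(T). (This is the forward part of the theorem stating that eigenvalues λ_k of A together with controls f_k steering the system to eigenvectors solve the generalized spectral problem Cᵀ ḟ_k + i λ_k Cᵀ f_k = 0.) -/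
/-- forward part of Theorem 3.1: if the control `f` (with `f(0) = f(T) = 0`)
steers the system to an eigenvector `u(T)` of `A` with eigenvalue `λ`, then the solution `w`
driven by `f'` satisfies `w(T) = −i·λ·u(T)` (the generalized spectral problem
`Cᵀ ḟ_k + i λ_k Cᵀ f_k = 0`). -/
theorem stmt_4 {H Y : Type*}
    [NormedAddCommGroup H] [NormedSpace ℂ H]
    [NormedAddCommGroup Y] [NormedSpace ℂ Y]
    (A : H →L[ℂ] H) (B : Y →L[ℂ] H) (T : ℝ) (hT : 0 < T)
    (f : ℝ → Y) (hf : ContDiff ℝ 1 f) (hf0 : f 0 = 0) (hfT : f T = 0)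
    (u w : ℝ → H) (hu : Differentiable ℝ u) (hw : Differentiable ℝ w)
    (hueq : ∀ t : ℝ, Complex.I • deriv u t = A (u t) + B (f t))
    (hu0 : u 0 = 0)
    (hweq : ∀ t : ℝ, Complex.I • deriv w t = A (w t) + B (deriv f t))
    (hw0 : w 0 = 0)
    (lam : ℂ) (heig : A (u T) = lam • u T) :
    w T = (-Complex.I * lam) • u T := by
  have hfd : Differentiable ℝ f := hf.differentiable one_ne_zero
  -- solve for deriv u, deriv w
  have hdu : ∀ t, deriv u t = (-Complex.I) • (A (u t) + B (f t)) := by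
    intro t
    have h := hueq t
    have := congrArg (fun x => (-Complex.I) • x) h
    simpa [smul_smul, Complex.I_mul_I] using this
  have hdw : ∀ t, deriv w t = (-Complex.I) • (A (w t) + B (deriv f t)) := by
    intro t
    have h := hweq t
    have := congrArg (fun x => (-Complex.I) • x) h
    simpa [smul_smul, Complex.I_mul_I] using this
  -- deriv u as a function
  have hduf : deriv u = fun t => (-Complex.I) • (A (u t) + B (f t)) := funext hdu
  -- deriv u satisfies the same ODE as w
  have hAu : ∀ t, HasDerivAt (fun s => A (u s)) (A (deriv u t)) t := fun t =>
    (A.restrictScalars ℝ).hasFDerivAt.comp_hasDerivAt t (hu t).hasDerivAt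
  have hBf : ∀ t, HasDerivAt (fun s => B (f s)) (B (deriv f t)) t := fun t =>
    (B.restrictScalars ℝ).hasFDerivAt.comp_hasDerivAt t (hfd t).hasDerivAt
  have hdu' : ∀ t, HasDerivAt (deriv u)
      ((-Complex.I) • (A (deriv u t) + B (deriv f t))) t := by
    intro t
    have h0 : HasDerivAt (fun t => (-Complex.I) • (A (u t) + B (f t))) _ t :=
      ((hAu t).add (hBf t)).const_smul (-Complex.I)
    rwa [← hduf] at h0
  have hw' : ∀ t, HasDerivAt w ((-Complex.I) • (A (w t) + B (deriv f t))) t := by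
    intro t
    have := (hw t).hasDerivAt
    rwa [hdw t] at this
  -- uniqueness: w = deriv u on [0, T]
  set v : ℝ → H → H := fun t x => (-Complex.I) • (A x + B (deriv f t)) with hv_def
  have hlip : ∀ t, LipschitzWith ‖A‖₊ (v t) := by
    intro t
    apply LipschitzWith.of_dist_le_mul
    intro x y
    simp only [hv_def, dist_eq_norm, ← smul_sub]
    rw [norm_smul]
    simp only [add_sub_add_right_eq_sub, ← map_sub]
    calc ‖-Complex.I‖ * ‖A (x - y)‖ = ‖A (x - y)‖ := by simp
      _ ≤ ‖A‖ * ‖x - y‖ := A.le_opNorm _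
  have heq : Set.EqOn w (deriv u) (Set.Icc 0 T) := by
    apply ODE_solution_unique hlip
    · exact fun t _ => (hw' t).continuousAt.continuousWithinAt
    · exact fun t _ => (hw' t).hasDerivWithinAt
    · exact fun t _ => ((hdu' t).continuousAt.continuousWithinAt)
    · exact fun t _ => (hdu' t).hasDerivWithinAt
    · rw [hdu 0, hw0, hu0, hf0]; simp
  have hwT : w T = deriv u T := heq ⟨le_of_lt hT, le_refl T⟩
  rw [hwT, hdu T, hfT, heig]
  simp [smul_smul]
end

section
/- Let g : ℝ → Y be continuously differentiable with g(0) = 0 and g(T) = 0. Let v : ℝ → H be differentiable with i·v'(t) = −A*(v(t)) − B(g(t)) for all t and v(0) = 0, and let w : ℝ → H be differentiable with i·w'(t) = −A*(w(t)) − B(g'(t)) for all t and w(0) = 0. Assume A*(v(T)) = μ·v(T) for some μ ∈ ℂ. Then w(T) = i·μ·v(T). (This shows the spectrum of A* and the controls g_k solve the adjoint generalized spectral problem (Cᵀ)* ġ_k − i·conj(λ_k)·(Cᵀ)* g_k = 0.) -/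
/-- the adjoint analogue of the generalized spectral problem:
if the control `g` (with `g(0) = g(T) = 0`) steers the adjoint system to an
eigenvector `v(T)` of `A*` with eigenvalue `μ`, then the solution `w` driven by `g'`
satisfies `w(T) = i·μ·v(T)` (the problem `(Cᵀ)* ġ_k − i·conj(λ_k)·(Cᵀ)* g_k = 0`). -/
theorem stmt_6 {H Y : Type*}
    [NormedAddCommGroup H] [InnerProductSpace ℂ H] [CompleteSpace H]
    [NormedAddCommGroup Y] [InnerProductSpace ℂ Y] [CompleteSpace Y]
    (A : H →L[ℂ] H) (B : Y →L[ℂ] H) (T : ℝ) (hT : 0 < T)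
    (g : ℝ → Y) (hg : ContDiff ℝ 1 g) (hg0 : g 0 = 0) (hgT : g T = 0)
    (v w : ℝ → H) (hv : Differentiable ℝ v) (hw : Differentiable ℝ w)
    (hveq : ∀ t : ℝ,
      Complex.I • deriv v t = -((ContinuousLinearMap.adjoint A) (v t)) - B (g t))
    (hv0 : v 0 = 0)
    (hweq : ∀ t : ℝ,
      Complex.I • deriv w t = -((ContinuousLinearMap.adjoint A) (w t)) - B (deriv g t))
    (hw0 : w 0 = 0)
    (μ : ℂ) (heig : (ContinuousLinearMap.adjoint A) (v T) = μ • v T) :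
    w T = (Complex.I * μ) • v T := by
  set L := ContinuousLinearMap.adjoint A with hL
  have hvd : ∀ t, deriv v t = Complex.I • (L (v t) + B (g t)) := by
    intro t
    have h1 := hveq t
    have h2 := congrArg (fun x => Complex.I • x) h1
    simp only [smul_smul, Complex.I_mul_I, neg_one_smul] at h2
    have h3 := congrArg Neg.neg h2
    simp only [neg_neg, neg_sub, smul_sub, smul_neg, sub_neg_eq_add] at h3
    rw [h3, smul_add, add_comm]
  have hwd : ∀ t, deriv w t = Complex.I • (L (w t) + B (deriv g t)) := by
    intro t
    have h1 := hweq t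
    have h2 := congrArg (fun x => Complex.I • x) h1
    simp only [smul_smul, Complex.I_mul_I, neg_one_smul] at h2
    have h3 := congrArg Neg.neg h2
    simp only [neg_neg, neg_sub, smul_sub, smul_neg, sub_neg_eq_add] at h3
    rw [h3, smul_add, add_comm]
  -- g is differentiable with continuous derivative
  have hgdiff : Differentiable ℝ g := hg.differentiable one_ne_zero
  -- the vector field
  set F : ℝ → H → H := fun t x => Complex.I • (L x + B (deriv g t)) with hF
  have hLip : ∀ t, LipschitzWith ‖L‖₊ (F t) := by
    intro t
    apply LipschitzWith.of_dist_le_mul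
    intro x y
    simp only [hF, dist_eq_norm]
    have : Complex.I • (L x + B (deriv g t)) - Complex.I • (L y + B (deriv g t))
        = Complex.I • (L (x - y)) := by
      simp only [map_sub, smul_sub, smul_add]
      abel
    rw [this]
    rw [norm_smul]
    simp only [Complex.norm_I, one_mul]
    exact L.le_opNorm _
  -- w solves x' = F t x
  have hwF : ∀ t ∈ Set.Ico (0:ℝ) T, HasDerivWithinAt w (F t (w t)) (Set.Ici t) t := by
    intro t _
    have := (hw t).hasDerivAt
    rw [hwd t] at this
    exact this.hasDerivWithinAt
  -- deriv v solves x' = F t x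
  have hvC : ∀ t, HasDerivAt (deriv v) (F t (deriv v t)) t := by
    intro t
    have hvdfun : deriv v = fun t => Complex.I • (L (v t) + B (g t)) := funext hvd
    rw [hvdfun]
    have h1 : HasDerivAt (fun t => L (v t) + B (g t))
        (L (deriv v t) + B (deriv g t)) t := by
      have hA := ((L.restrictScalars ℝ).hasFDerivAt (x := v t)).comp_hasDerivAt t (hv t).hasDerivAt
      have hB := ((B.restrictScalars ℝ).hasFDerivAt (x := g t)).comp_hasDerivAt t (hgdiff t).hasDerivAt
      exact hA.add hB
    have h2 := h1.const_smul (Complex.I)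
    convert h2 using 1
    · rfl
    simp only [hF, hvd t]
  -- uniqueness of the ODE solution: w = deriv v on [0, T]
  have huniq : Set.EqOn w (deriv v) (Set.Icc 0 T) := by
    apply ODE_solution_unique hLip
    · exact hw.continuous.continuousOn
    · exact hwF
    · have : Continuous (deriv v) := by
        have : deriv v = fun t => Complex.I • (L (v t) + B (g t)) := funext hvd
        rw [this]
        exact (((L.continuous.comp hv.continuous).add
          (B.continuous.comp hgdiff.continuous)).const_smul _)
      exact this.continuousOn
    · intro t _
      exact (hvC t).hasDerivWithinAt
    · rw [hw0, hvd 0, hv0, hg0]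
      simp
  have hwT : w T = deriv v T := huniq ⟨hT.le, le_rfl⟩
  rw [hwT, hvd T, hgT, heig]
  simp [smul_smul]
end

section
/- Let g : ℝ → Y be continuous, let v : ℝ → H be differentiable with i·v'(t) = −A*(v(t)) − B(g(t)) for t ∈ [0,T] and v(0) = 0, and let a ∈ H. Let w : ℝ → H be differentiable with i·w'(t) + A(w(t)) = 0 for t ∈ [0,T] and w(T) = a. Then ⟨v(T), a⟩_H = i ∫₀ᵀ ⟨g(t), B*(w(t))⟩_Y dt. (This is the identity (W_#ᵀ)* = −i·𝕆ᵀ relating the adjoint of the control operator W_#ᵀ g := v^g(T) to the observation operator (𝕆ᵀ a)(t) := B* w^a(t).) -/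
/-- the identity `(W_#ᵀ)* = −i·𝕆ᵀ`:
`⟨v(T), a⟩_H = i ∫₀ᵀ ⟨g(t), B*(w(t))⟩_Y dt`, where `v` solves the adjoint control
system and `w` solves `i w_t + A w = 0`, `w(T) = a`.  The paper's inner product
`⟨a, b⟩` (linear in the first argument) is rendered as Mathlib's `inner b a`. -/
theorem stmt_7 {H Y : Type*}
    [NormedAddCommGroup H] [InnerProductSpace ℂ H] [CompleteSpace H]
    [NormedAddCommGroup Y] [InnerProductSpace ℂ Y] [CompleteSpace Y]
    (A : H →L[ℂ] H) (B : Y →L[ℂ] H) (T : ℝ) (hT : 0 < T)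
    (g : ℝ → Y) (hg : Continuous g)
    (v : ℝ → H) (hv : Differentiable ℝ v)
    (hveq : ∀ t ∈ Set.Icc (0 : ℝ) T,
      Complex.I • deriv v t = -((ContinuousLinearMap.adjoint A) (v t)) - B (g t))
    (hv0 : v 0 = 0)
    (a : H) (w : ℝ → H) (hw : Differentiable ℝ w)
    (hweq : ∀ t ∈ Set.Icc (0 : ℝ) T, Complex.I • deriv w t + A (w t) = 0)
    (hwT : w T = a) :
    (inner ℂ a (v T) : ℂ) =
      Complex.I *
        ∫ t in (0 : ℝ)..T, (inner ℂ ((ContinuousLinearMap.adjoint B) (w t)) (g t) : ℂ) := by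
  set F : ℝ → ℂ := fun t => (inner ℂ (w t) (v t) : ℂ) with hF
  have key : ∀ t ∈ Set.uIcc (0 : ℝ) T,
      HasDerivAt F (Complex.I * (inner ℂ ((ContinuousLinearMap.adjoint B) (w t)) (g t) : ℂ)) t := by
    intro t ht
    rw [Set.uIcc_of_le hT.le] at ht
    have hdv : deriv v t = (-Complex.I) • (-((ContinuousLinearMap.adjoint A) (v t)) - B (g t)) := by
      rw [← hveq t ht, smul_smul]
      simp
    have hdw : deriv w t = (-Complex.I) • (-(A (w t))) := by
      have h := hweq t ht
      have : Complex.I • deriv w t = -(A (w t)) := by linear_combination (norm := abel) h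
      rw [← this, smul_smul]
      simp
    have h1 : HasDerivAt v (deriv v t) t := (hv t).hasDerivAt
    have h2 : HasDerivAt w (deriv w t) t := (hw t).hasDerivAt
    have h3 := h2.inner ℂ h1
    convert h3 using 1
    case e'_4 => rfl
    rw [hdv, hdw]
    simp [inner_smul_left, inner_smul_right, inner_sub_right, inner_neg_right, inner_neg_left,
      ContinuousLinearMap.adjoint_inner_right, ContinuousLinearMap.adjoint_inner_left,
      Complex.conj_I]
    ring
  have hcont : Continuous fun t => (inner ℂ ((ContinuousLinearMap.adjoint B) (w t)) (g t) : ℂ) :=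
    Continuous.inner ((ContinuousLinearMap.adjoint B).continuous.comp hw.continuous) hg
  have hint : IntervalIntegrable
      (fun t => Complex.I * (inner ℂ ((ContinuousLinearMap.adjoint B) (w t)) (g t) : ℂ))
      MeasureTheory.volume 0 T := (continuous_const.mul hcont).intervalIntegrable 0 T
  have := intervalIntegral.integral_eq_sub_of_hasDerivAt key hint
  rw [intervalIntegral.integral_const_mul] at this
  have hF0 : F 0 = 0 := by simp [hF, hv0]
  have hFT : F T = inner ℂ a (v T) := by simp [hF, hwT]
  rw [hF0, hFT, sub_zero] at this
  exact this.symm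
end

section
/- Let φ ∈ H and λ ∈ ℂ satisfy A(φ) = λ·φ. Let g : ℝ → Y be continuous and let v : ℝ → H be differentiable with i·v'(t) = −A*(v(t)) − B(g(t)) for t ∈ [0,T] and v(0) = 0. Then ⟨φ, v(T)⟩_H = −i ∫₀ᵀ ⟨exp(−i·λ·(T−t))·B*(φ), g(t)⟩_Y dt. (This is the formula −i·O φ_k = (Cᵀ f_k)(T) used to recover the trace O φ_k = B* φ_k of an eigenvector from the connecting operator and the normalized control.) -/
/-- the trace-recovery formula `−i·O φ_k = (Cᵀ f_k)(T)`:
if `A φ = λ φ` and `v` solves the adjoint control system with control `g`, then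
`⟨φ, v(T)⟩_H = −i ∫₀ᵀ ⟨exp(−i λ (T−t)) B* φ, g(t)⟩_Y dt`.  The paper's inner
product `⟨a, b⟩` (linear in the first argument) is rendered as Mathlib's `inner b a`. -/
theorem stmt_8 {H Y : Type*}
    [NormedAddCommGroup H] [InnerProductSpace ℂ H] [CompleteSpace H]
    [NormedAddCommGroup Y] [InnerProductSpace ℂ Y] [CompleteSpace Y]
    (A : H →L[ℂ] H) (B : Y →L[ℂ] H) (T : ℝ) (hT : 0 < T)
    (φ : H) (lam : ℂ) (heig : A φ = lam • φ)
    (g : ℝ → Y) (hg : Continuous g)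
    (v : ℝ → H) (hv : Differentiable ℝ v)
    (hveq : ∀ t ∈ Set.Icc (0 : ℝ) T,
      Complex.I • deriv v t = -((ContinuousLinearMap.adjoint A) (v t)) - B (g t))
    (hv0 : v 0 = 0) :
    (inner ℂ (v T) φ : ℂ) =
      -Complex.I *
        ∫ t in (0 : ℝ)..T,
          (inner ℂ (g t)
            (Complex.exp (-Complex.I * lam * ((T - t : ℝ) : ℂ)) •
              (ContinuousLinearMap.adjoint B) φ) : ℂ) := by
  have hT' : (0:ℝ) ≤ T := hT.le
  set A' := ContinuousLinearMap.adjoint A with hA'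
  set B' := ContinuousLinearMap.adjoint B with hB'
  set f : ℝ → ℂ := fun t => (inner ℂ (v t) φ : ℂ) with hf
  set u : ℝ → ℂ := fun t => Complex.exp (Complex.I * lam * t) * f t with hu
  set w : ℝ → ℂ := fun t =>
    -Complex.I * (Complex.exp (Complex.I * lam * t) * (inner ℂ (g t) (B' φ) : ℂ)) with hw
  have key : ∀ t ∈ Set.uIcc (0:ℝ) T, HasDerivAt u (w t) t := by
    intro t ht
    rw [Set.uIcc_of_le hT'] at ht
    have hv' : HasDerivAt v (deriv v t) t := (hv t).hasDerivAt
    have hfd : HasDerivAt f ((inner ℂ (deriv v t) φ : ℂ)) t := by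
      simpa using hv'.inner ℂ (hasDerivAt_const t φ)
    have hdv : deriv v t = (-Complex.I) • (-(A' (v t)) - B (g t)) := by
      rw [← hveq t ht, smul_smul]
      simp
    have h2 : (inner ℂ (deriv v t) φ : ℂ)
        = -Complex.I * (lam * f t + (inner ℂ (g t) (B' φ) : ℂ)) := by
      rw [hdv, inner_smul_left, inner_sub_left, inner_neg_left,
        hA', ContinuousLinearMap.adjoint_inner_left, heig, inner_smul_right,
        hB', ContinuousLinearMap.adjoint_inner_right]
      simp [hf]
      ring
    have he : HasDerivAt (fun s : ℝ => Complex.exp (Complex.I * lam * s))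
        (Complex.exp (Complex.I * lam * t) * (Complex.I * lam)) t := by
      have h0 : HasDerivAt (fun s : ℝ => (Complex.I * lam) * (s : ℂ)) (Complex.I * lam) t := by
        simpa using (Complex.ofRealCLM.hasDerivAt (x := t)).const_mul (Complex.I * lam)
      simpa using h0.cexp
    have := he.mul hfd
    refine this.congr_deriv ?_
    rw [h2]
    simp only [hf]
    ring
  have hwc : Continuous w := by
    have h1 : Continuous fun t : ℝ => (inner ℂ (g t) (B' φ) : ℂ) :=
      hg.inner continuous_const
    have h2 : Continuous fun t : ℝ => Complex.exp (Complex.I * lam * t) :=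
      Complex.continuous_exp.comp (continuous_const.mul Complex.continuous_ofReal)
    exact continuous_const.mul (h2.mul h1)
  have hFTC := intervalIntegral.integral_eq_sub_of_hasDerivAt key (hwc.intervalIntegrable 0 T)
  have hu0 : u 0 = 0 := by simp [hu, hf, hv0]
  have huT : u T = ∫ t in (0:ℝ)..T, w t := by rw [hFTC, hu0, sub_zero]
  have hfT : f T = Complex.exp (-(Complex.I * lam * T)) * u T := by
    rw [hu, ← mul_assoc, ← Complex.exp_add]
    simp
  have hint2 : ∀ t : ℝ, (inner ℂ (g t) (Complex.exp (-Complex.I * lam * ((T - t:ℝ):ℂ)) • B' φ) : ℂ)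
      = Complex.exp (-(Complex.I * lam * T)) *
          (Complex.exp (Complex.I * lam * t) * (inner ℂ (g t) (B' φ) : ℂ)) := by
    intro t
    rw [inner_smul_right, ← mul_assoc, ← Complex.exp_add]
    push_cast
    ring_nf
  show f T = _
  rw [hfT, huT]
  simp only [hw, hint2]
  rw [intervalIntegral.integral_const_mul, intervalIntegral.integral_const_mul]
  ring
end

section
/- Let ψ ∈ H and μ ∈ ℂ satisfy A*(ψ) = μ·ψ. Let f : ℝ → Y be continuous and let u : ℝ → H be differentiable with i·u'(t) = A(u(t)) + B(f(t)) for t ∈ [0,T] and u(0) = 0. Then ⟨u(T), ψ⟩_H = −i ∫₀ᵀ ⟨f(t), exp(i·μ·(T−t))·B*(ψ)⟩_Y dt. (This is the formula i·O ψ_k = ((Cᵀ)* g_k)(T) used to recover the trace O ψ_k = B* ψ_k of an eigenvector of the adjoint operator.) -/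
/-- the trace-recovery formula `i·O ψ_k = ((Cᵀ)* g_k)(T)`:
if `A* ψ = μ ψ` and `u` solves the forward control system with control `f`, then
`⟨u(T), ψ⟩_H = −i ∫₀ᵀ ⟨f(t), exp(i μ (T−t)) B* ψ⟩_Y dt`.  The paper's inner
product `⟨a, b⟩` (linear in the first argument) is rendered as Mathlib's `inner b a`. -/
theorem stmt_9 {H Y : Type*}
    [NormedAddCommGroup H] [InnerProductSpace ℂ H] [CompleteSpace H]
    [NormedAddCommGroup Y] [InnerProductSpace ℂ Y] [CompleteSpace Y]
    (A : H →L[ℂ] H) (B : Y →L[ℂ] H) (T : ℝ) (hT : 0 < T)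
    (ψ : H) (μ : ℂ) (heig : (ContinuousLinearMap.adjoint A) ψ = μ • ψ)
    (f : ℝ → Y) (hf : Continuous f)
    (u : ℝ → H) (hu : Differentiable ℝ u)
    (hueq : ∀ t ∈ Set.Icc (0 : ℝ) T,
      Complex.I • deriv u t = A (u t) + B (f t))
    (hu0 : u 0 = 0) :
    (inner ℂ ψ (u T) : ℂ) =
      -Complex.I *
        ∫ t in (0 : ℝ)..T,
          (inner ℂ
            (Complex.exp (Complex.I * μ * ((T - t : ℝ) : ℂ)) •
              (ContinuousLinearMap.adjoint B) ψ)
            (f t) : ℂ) := by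
  set c : ℂ := Complex.I * (starRingEnd ℂ) μ with hc
  set Bψ : Y := (ContinuousLinearMap.adjoint B) ψ with hBψ
  set φ : ℝ → ℂ := fun t => (inner ℂ ψ (u t) : ℂ) with hφdef
  set w : ℝ → ℂ := fun t => Complex.exp (c * t) * φ t with hwdef
  have hderiv : ∀ t ∈ Set.uIcc (0:ℝ) T,
      HasDerivAt w (-Complex.I * Complex.exp (c * ↑t) * (inner ℂ Bψ (f t) : ℂ)) t := by
    intro t ht
    rw [Set.uIcc_of_le hT.le] at ht
    have hu' : HasDerivAt u (deriv u t) t := (hu t).hasDerivAt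
    have hφ' : HasDerivAt φ ((inner ℂ ψ (deriv u t) : ℂ)) t := by
      have h := (((innerSL ℂ ψ).restrictScalars ℝ).hasFDerivAt (x := u t)).comp_hasDerivAt t hu'
      simpa [hφdef, Function.comp_def] using h
    have hexp : HasDerivAt (fun s : ℝ => Complex.exp (c * ↑s))
        (Complex.exp (c * ↑t) * (c * 1)) t :=
      HasDerivAt.cexp ((Complex.ofRealCLM.hasDerivAt).const_mul c)
    have h2 : (Complex.I : ℂ) * (inner ℂ ψ (deriv u t) : ℂ)
        = (starRingEnd ℂ) μ * φ t + (inner ℂ Bψ (f t) : ℂ) := by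
      rw [← inner_smul_right, hueq t ht, inner_add_right]
      congr 1
      · rw [← ContinuousLinearMap.adjoint_inner_left, heig, inner_smul_left]
      · exact (ContinuousLinearMap.adjoint_inner_left B (f t) ψ).symm
    have key : (inner ℂ ψ (deriv u t) : ℂ)
        = -Complex.I * ((starRingEnd ℂ) μ * φ t + (inner ℂ Bψ (f t) : ℂ)) := by
      have hI : (-Complex.I) * Complex.I = 1 := by
        simp [Complex.I_mul_I]
      calc (inner ℂ ψ (deriv u t) : ℂ)
          = (-Complex.I * Complex.I) * (inner ℂ ψ (deriv u t) : ℂ) := by rw [hI, one_mul]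
        _ = -Complex.I * (Complex.I * (inner ℂ ψ (deriv u t) : ℂ)) := by ring
        _ = _ := by rw [h2]
    have heq : -Complex.I * Complex.exp (c * ↑t) * (inner ℂ Bψ (f t) : ℂ)
        = Complex.exp (c * ↑t) * (c * 1) * φ t
          + Complex.exp (c * ↑t) * (inner ℂ ψ (deriv u t) : ℂ) := by
      rw [key, hc]; ring
    rw [heq]
    exact hexp.mul hφ'
  have hcont : Continuous (fun t : ℝ =>
      -Complex.I * Complex.exp (c * ↑t) * (inner ℂ Bψ (f t) : ℂ)) := by
    have h1 : Continuous (fun t : ℝ => Complex.exp (c * ↑t)) := by fun_prop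
    have h2 : Continuous (fun t : ℝ => (inner ℂ Bψ (f t) : ℂ)) :=
      (innerSL ℂ Bψ).continuous.comp hf
    exact (continuous_const.mul h1).mul h2
  have hFTC := intervalIntegral.integral_eq_sub_of_hasDerivAt hderiv
    (hcont.intervalIntegrable 0 T)
  have hw0 : w 0 = 0 := by simp [hwdef, hφdef, hu0]
  rw [hw0, sub_zero] at hFTC
  have hinteg : ∀ t : ℝ,
      (inner ℂ (Complex.exp (Complex.I * μ * ((T - t : ℝ) : ℂ)) • Bψ) (f t) : ℂ)
      = Complex.exp (-(c * ↑T)) * (Complex.exp (c * ↑t) * (inner ℂ Bψ (f t) : ℂ)) := by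
    intro t
    rw [inner_smul_left, ← Complex.exp_conj]
    have hconj : (starRingEnd ℂ) (Complex.I * μ * ((T - t : ℝ) : ℂ)) = -(c * ↑T) + c * ↑t := by
      rw [map_mul, map_mul, Complex.conj_I, Complex.conj_ofReal, hc]
      push_cast
      ring
    rw [hconj, Complex.exp_add]
    ring
  have hpull : ∫ t in (0:ℝ)..T, -Complex.I * Complex.exp (c * ↑t) * (inner ℂ Bψ (f t) : ℂ)
      = -Complex.I * ∫ t in (0:ℝ)..T, Complex.exp (c * ↑t) * (inner ℂ Bψ (f t) : ℂ) := by
    rw [← intervalIntegral.integral_const_mul]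
    simp [mul_assoc]
  calc (inner ℂ ψ (u T) : ℂ)
      = Complex.exp (-(c * ↑T)) * (Complex.exp (c * ↑T) * φ T) := by
        rw [← mul_assoc, ← Complex.exp_add, neg_add_cancel, Complex.exp_zero, one_mul]
    _ = Complex.exp (-(c * ↑T)) *
        (∫ t in (0:ℝ)..T, -Complex.I * Complex.exp (c * ↑t) * (inner ℂ Bψ (f t) : ℂ)) := by
        rw [hFTC]
    _ = -Complex.I *
        ∫ t in (0:ℝ)..T,
          (inner ℂ (Complex.exp (Complex.I * μ * ((T - t : ℝ) : ℂ)) • Bψ) (f t) : ℂ) := by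
        simp only [hinteg]
        rw [intervalIntegral.integral_const_mul, hpull]
        ring
end

section
/- Let f, f_prev : ℝ → Y be continuously differentiable with f(0) = f(T) = 0. Let u, u_prev, w : ℝ → H be differentiable with i·u'(t) = A(u(t)) + B(f(t)), u(0) = 0; i·u_prev'(t) = A(u_prev(t)) + B(f_prev(t)), u_prev(0) = 0; and i·w'(t) = A(w(t)) + B(f'(t)), w(0) = 0. Assume the Jordan chain relation A(u(T)) = λ·u(T) + u_prev(T) for some λ ∈ ℂ. Then w(T) = −i·λ·u(T) − i·u_prev(T). (This shows the controls steering the system to a Jordan chain of root vectors φ_k^l, with (A − λ_k)φ_k^l = φ_k^{l−1}, solve the generalized spectral problem Cᵀ ḟ_k^l + i λ_k Cᵀ f_k^l = −i Cᵀ f_k^{l−1}.) -/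
open Set

/-- Jordan-chain version of the generalized spectral problem:
if `A(u(T)) = λ·u(T) + u_prev(T)` then `w(T) = −i·λ·u(T) − i·u_prev(T)`,
i.e. `Cᵀ ḟ_k^l + i λ_k Cᵀ f_k^l = −i Cᵀ f_k^{l−1}`. -/
theorem stmt_10 {H Y : Type*}
    [NormedAddCommGroup H] [NormedSpace ℂ H]
    [NormedAddCommGroup Y] [NormedSpace ℂ Y]
    (A : H →L[ℂ] H) (B : Y →L[ℂ] H) (T : ℝ) (hT : 0 < T)
    (f f_prev : ℝ → Y) (hf : ContDiff ℝ 1 f) (hf_prev : ContDiff ℝ 1 f_prev)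
    (hf0 : f 0 = 0) (hfT : f T = 0)
    (u u_prev w : ℝ → H)
    (hu : Differentiable ℝ u) (hu_prev : Differentiable ℝ u_prev)
    (hw : Differentiable ℝ w)
    (hueq : ∀ t : ℝ, Complex.I • deriv u t = A (u t) + B (f t))
    (hu0 : u 0 = 0)
    (hu_preveq : ∀ t : ℝ, Complex.I • deriv u_prev t = A (u_prev t) + B (f_prev t))
    (hu_prev0 : u_prev 0 = 0)
    (hweq : ∀ t : ℝ, Complex.I • deriv w t = A (w t) + B (deriv f t))
    (hw0 : w 0 = 0)
    (lam : ℂ) (hchain : A (u T) = lam • u T + u_prev T) :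
    w T = (-Complex.I * lam) • u T - Complex.I • u_prev T := by
  -- derivative formulas: x' = -i • (A x + B g)
  have hderiv : ∀ t, deriv u t = (-Complex.I) • (A (u t) + B (f t)) := by
    intro t
    have := hueq t
    calc deriv u t = (-Complex.I) • (Complex.I • deriv u t) := by
          rw [smul_smul]; simp
      _ = (-Complex.I) • (A (u t) + B (f t)) := by rw [this]
  have hwderiv : ∀ t, deriv w t = (-Complex.I) • (A (w t) + B (deriv f t)) := by
    intro t
    have := hweq t
    calc deriv w t = (-Complex.I) • (Complex.I • deriv w t) := by
          rw [smul_smul]; simp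
      _ = (-Complex.I) • (A (w t) + B (deriv f t)) := by rw [this]
  -- the candidate: v t := -i • (A (u t) + B (f t)) = deriv u t
  set v : ℝ → H := fun t => (-Complex.I) • (A (u t) + B (f t)) with hv
  have hf' : Differentiable ℝ f := hf.differentiable one_ne_zero
  have hvdiff : Differentiable ℝ v :=
    (((A.restrictScalars ℝ).differentiable.comp hu).add
      ((B.restrictScalars ℝ).differentiable.comp hf')).const_smul _
  have hvderiv : ∀ t, deriv v t = (-Complex.I) • (A (deriv u t) + B (deriv f t)) := by
    intro t
    have h1 : HasDerivAt (fun s => A (u s)) (A (deriv u t)) t :=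
      (A.restrictScalars ℝ).hasFDerivAt.comp_hasDerivAt t (hu t).hasDerivAt
    have h2 : HasDerivAt (fun s => B (f s)) (B (deriv f t)) t :=
      (B.restrictScalars ℝ).hasFDerivAt.comp_hasDerivAt t (hf' t).hasDerivAt
    have : HasDerivAt v ((-Complex.I) • (A (deriv u t) + B (deriv f t))) t :=
      ((h1.add h2).const_smul (-Complex.I))
    exact this.deriv
  -- both w and v solve x' = -i • A x + (-i) • B (f' t), with same initial value
  have hv0 : v 0 = 0 := by simp [hv, hu0, hf0]
  -- Use ODE uniqueness for the vector field F t x = -i • A x + (-i)•B (f' t)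
  set F : ℝ → H → H := fun t x => (-Complex.I) • A x + (-Complex.I) • B (deriv f t)
    with hF
  have hlip : ∀ t, LipschitzWith ((‖A‖₊ : NNReal)) (F t) := by
    intro t x y
    rw [edist_eq_enorm_sub, edist_eq_enorm_sub, enorm_eq_nnnorm, enorm_eq_nnnorm]
    have h1 : F t x - F t y = (-Complex.I) • A (x - y) := by
      simp only [hF, map_sub, smul_sub]
      abel
    rw [h1]
    calc (‖(-Complex.I) • A (x - y)‖₊ : ENNReal) = ‖A (x - y)‖₊ := by
          rw [nnnorm_smul]; simp
      _ ≤ ‖A‖₊ * ‖x - y‖₊ := by exact_mod_cast A.le_opNNNorm (x - y)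
  have hwF : ∀ t ∈ Ico (0:ℝ) T, HasDerivWithinAt w (F t (w t)) (Ici t) t := by
    intro t _
    have : HasDerivAt w (deriv w t) t := (hw t).hasDerivAt
    rw [hwderiv t] at this
    have heq : (-Complex.I) • (A (w t) + B (deriv f t)) = F t (w t) := by
      simp [hF, smul_add]
    exact (heq ▸ this).hasDerivWithinAt
  have hvF : ∀ t ∈ Ico (0:ℝ) T, HasDerivWithinAt v (F t (v t)) (Ici t) t := by
    intro t _
    have : HasDerivAt v (deriv v t) t := (hvdiff t).hasDerivAt
    rw [hvderiv t] at this
    have heq : (-Complex.I) • (A (deriv u t) + B (deriv f t)) = F t (v t) := by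
      have : deriv u t = v t := hderiv t
      rw [this]
      simp [hF, smul_add]
    exact (heq ▸ this).hasDerivWithinAt
  have huniq : EqOn w v (Icc 0 T) :=
    ODE_solution_unique hlip hw.continuous.continuousOn hwF
      hvdiff.continuous.continuousOn hvF (by rw [hw0, hv0])
  have hwT : w T = v T := huniq (by constructor <;> [exact le_of_lt hT; rfl])
  rw [hwT]
  simp only [hv, hfT, map_zero, add_zero, hchain, smul_add, smul_smul]
  module
end

section
/- Let g, g_next : ℝ → Y be continuously differentiable with g(0) = g(T) = 0. Let v, v_next, w : ℝ → H be differentiable with i·v'(t) = −A*(v(t)) − B(g(t)), v(0) = 0; i·v_next'(t) = −A*(v_next(t)) − B(g_next(t)), v_next(0) = 0; and i·w'(t) = −A*(w(t)) − B(g'(t)), w(0) = 0. Assume the adjoint Jordan chain relation A*(v(T)) = μ·v(T) + v_next(T) for some μ ∈ ℂ. Then w(T) = i·μ·v(T) + i·v_next(T). (This shows the controls steering the adjoint system to a Jordan chain of root vectors ψ_k^l of A* solve the adjoint generalized spectral problem (Cᵀ)* ġ_k^l − i·conj(λ_k)·(Cᵀ)* g_k^l = i (Cᵀ)* g_k^{l+1}.)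 -/
open Set

/-- adjoint Jordan-chain version of the generalized spectral problem:
if `A*(v(T)) = μ·v(T) + v_next(T)` then `w(T) = i·μ·v(T) + i·v_next(T)`,
i.e. `(Cᵀ)* ġ_k^l − i·conj(λ_k)·(Cᵀ)* g_k^l = i (Cᵀ)* g_k^{l+1}`. -/
theorem stmt_11 {H Y : Type*}
    [NormedAddCommGroup H] [InnerProductSpace ℂ H] [CompleteSpace H]
    [NormedAddCommGroup Y] [InnerProductSpace ℂ Y] [CompleteSpace Y]
    (A : H →L[ℂ] H) (B : Y →L[ℂ] H) (T : ℝ) (hT : 0 < T)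
    (g g_next : ℝ → Y) (hg : ContDiff ℝ 1 g) (hg_next : ContDiff ℝ 1 g_next)
    (hg0 : g 0 = 0) (hgT : g T = 0)
    (v v_next w : ℝ → H)
    (hv : Differentiable ℝ v) (hv_next : Differentiable ℝ v_next)
    (hw : Differentiable ℝ w)
    (hveq : ∀ t : ℝ,
      Complex.I • deriv v t = -((ContinuousLinearMap.adjoint A) (v t)) - B (g t))
    (hv0 : v 0 = 0)
    (hv_nexteq : ∀ t : ℝ,
      Complex.I • deriv v_next t = -((ContinuousLinearMap.adjoint A) (v_next t)) - B (g_next t))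
    (hv_next0 : v_next 0 = 0)
    (hweq : ∀ t : ℝ,
      Complex.I • deriv w t = -((ContinuousLinearMap.adjoint A) (w t)) - B (deriv g t))
    (hw0 : w 0 = 0)
    (μ : ℂ) (hchain : (ContinuousLinearMap.adjoint A) (v T) = μ • v T + v_next T) :
    w T = (Complex.I * μ) • v T + Complex.I • v_next T := by
  set L : H →L[ℂ] H := Complex.I • (ContinuousLinearMap.adjoint A) with hL
  have hLapp : ∀ x, L x = Complex.I • (ContinuousLinearMap.adjoint A) x := fun x => rfl
  have hgdiff : Differentiable ℝ g := hg.differentiable one_ne_zero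
  -- solve for deriv from the equations
  have key : ∀ (u : ℝ → H) (c : ℝ → Y),
      (∀ t : ℝ, Complex.I • deriv u t
        = -((ContinuousLinearMap.adjoint A) (u t)) - B (c t)) →
      ∀ t : ℝ, deriv u t = L (u t) + Complex.I • B (c t) := by
    intro u c heq t
    have hinj : Function.Injective (fun x : H => Complex.I • x) :=
      smul_right_injective H Complex.I_ne_zero
    apply hinj
    show Complex.I • deriv u t = _
    rw [heq t]
    simp [hLapp, smul_add, smul_smul, Complex.I_mul_I, sub_eq_add_neg]
  have hvder : ∀ t, deriv v t = L (v t) + Complex.I • B (g t) := key v g hveq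
  have hwder : ∀ t, deriv w t = L (w t) + Complex.I • B (deriv g t) := key w (deriv g) hweq
  -- the ODE vector field
  set F : ℝ → H → H := fun t x => L x + Complex.I • B (deriv g t) with hF
  have hlip : ∀ t, LipschitzWith ‖L‖₊ (F t) := by
    intro t
    apply LipschitzWith.of_dist_le_mul
    intro x y
    simp only [hF, dist_eq_norm, add_sub_add_right_eq_sub, ← map_sub]
    exact L.le_opNorm _
  -- w is a solution
  have hwsol : ∀ t : ℝ, HasDerivAt w (F t (w t)) t := by
    intro t
    have := (hw t).hasDerivAt
    rwa [hwder t] at this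
  -- deriv v is a solution
  have hvdsol : ∀ t : ℝ, HasDerivAt (deriv v) (F t (deriv v t)) t := by
    intro t
    have h1 : HasDerivAt (fun s => L (v s) + Complex.I • B (g s))
        (L (deriv v t) + Complex.I • B (deriv g t)) t := by
      have hA : HasDerivAt (⇑L ∘ v) (L (deriv v t)) t :=
        (L.restrictScalars ℝ).hasFDerivAt.comp_hasDerivAt t (hv t).hasDerivAt
      have hB0 : HasDerivAt (⇑B ∘ g) (B (deriv g t)) t :=
        (B.restrictScalars ℝ).hasFDerivAt.comp_hasDerivAt t (hgdiff t).hasDerivAt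
      have hB : HasDerivAt (fun s => Complex.I • B (g s)) (Complex.I • B (deriv g t)) t :=
        hB0.const_smul Complex.I
      exact hA.add hB
    have heq : (deriv v) =ᶠ[nhds t] (fun s => L (v s) + Complex.I • B (g s)) :=
      Filter.Eventually.of_forall hvder
    have h2 := h1.congr_of_eventuallyEq heq
    rwa [hvder t] at h2 ⊢
  -- initial values agree: both 0
  have hvd0 : deriv v 0 = 0 := by
    rw [hvder 0, hv0, hg0]; simp
  -- uniqueness
  have huniq : EqOn w (deriv v) (Icc 0 T) :=
    ODE_solution_unique hlip
      (fun t _ => (hw t).continuousAt.continuousWithinAt)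
      (fun t _ => (hwsol t).hasDerivWithinAt)
      (fun t _ => (hvdsol t).continuousAt.continuousWithinAt)
      (fun t _ => (hvdsol t).hasDerivWithinAt)
      (by rw [hw0, hvd0])
  have hwT : w T = deriv v T := huniq ⟨le_of_lt hT, le_refl T⟩
  rw [hwT, hvder T, hgT, hLapp, hchain]
  simp [smul_add, smul_smul]
end

section
/- Let λ ∈ ℂ, let L ≥ 1, and let ψ₁,…,ψ_L ∈ H be a Jordan chain for A*: A*(ψ_L) = conj(λ)·ψ_L and A*(ψ_j) = conj(λ)·ψ_j + ψ_{j+1} for 1 ≤ j ≤ L−1. Let φ₁ ∈ H satisfy A(φ₁) = λ·φ₁ and ⟨φ₁, ψ₁⟩ ≠ 0, and set φ̂₁ := ⟨φ₁, ψ₁⟩⁻¹·φ₁. Suppose that for 2 ≤ l ≤ L, φ_l ∈ H satisfies A(φ_l) = λ·φ_l + φ̂_{l−1}, and define recursively φ̂_l := φ_l − ⟨φ_l, ψ₁⟩·φ̂₁. Then ⟨φ̂_l, ψ_j⟩ = δ_{lj} for all 1 ≤ l, j ≤ L, i.e. the constructed chain φ̂₁,…,φ̂_L is biorthogonal to ψ₁,…,ψ_L.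 (This justifies the normalization steps f̂_k^1 = f_k^1 / (Cᵀ f_k^1, g_k^1) and f̂_k^l = f_k^l − (Cᵀ f_k^l, g_k^1)·f̂_k^1 producing controls with (Cᵀ f̂_k^l, g_k^j) = δ_{lj}.) -/
/-- the normalization procedure of Section 5:
given a Jordan chain `ψ₁,…,ψ_L` of `A*`, an eigenvector `φ₁` of `A` with
`⟨φ₁, ψ₁⟩ ≠ 0`, `φ̂₁ := ⟨φ₁, ψ₁⟩⁻¹ • φ₁`, and chain members `φ_l` with
`A φ_l = λ φ_l + φ̂_{l−1}` and `φ̂_l := φ_l − ⟨φ_l, ψ₁⟩ • φ̂₁` for `2 ≤ l ≤ L`,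
the family `φ̂₁,…,φ̂_L` is biorthogonal to `ψ₁,…,ψ_L`: `⟨φ̂_l, ψ_j⟩ = δ_{lj}`.
The paper's inner product `⟨a, b⟩` (linear in the first argument) is rendered as
Mathlib's `inner b a`. -/
theorem stmt_14 {H : Type*}
    [NormedAddCommGroup H] [InnerProductSpace ℂ H] [CompleteSpace H]
    (A : H →L[ℂ] H) (lam : ℂ) (L : ℕ) (hL : 1 ≤ L)
    (ψ : ℕ → H)
    (hψL : (ContinuousLinearMap.adjoint A) (ψ L) = (starRingEnd ℂ) lam • ψ L)
    (hψ : ∀ j : ℕ, 1 ≤ j → j ≤ L - 1 →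
      (ContinuousLinearMap.adjoint A) (ψ j) = (starRingEnd ℂ) lam • ψ j + ψ (j + 1))
    (φ φhat : ℕ → H)
    (hφ1 : A (φ 1) = lam • φ 1)
    (hne : (inner ℂ (ψ 1) (φ 1) : ℂ) ≠ 0)
    (hφhat1 : φhat 1 = (inner ℂ (ψ 1) (φ 1) : ℂ)⁻¹ • φ 1)
    (hφ : ∀ l : ℕ, 2 ≤ l → l ≤ L → A (φ l) = lam • φ l + φhat (l - 1))
    (hφhat : ∀ l : ℕ, 2 ≤ l → l ≤ L →
      φhat l = φ l - (inner ℂ (ψ 1) (φ l) : ℂ) • φhat 1) :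
    ∀ l j : ℕ, 1 ≤ l → l ≤ L → 1 ≤ j → j ≤ L →
      (inner ℂ (ψ j) (φhat l) : ℂ) = if l = j then 1 else 0 := by
  have step : ∀ (x : H) (j : ℕ), 1 ≤ j → j ≤ L - 1 →
      (inner ℂ (ψ (j+1)) x : ℂ) = inner ℂ (ψ j) (A x) - lam * inner ℂ (ψ j) x := by
    intro x j h1 h2
    have h2' : (inner ℂ ((ContinuousLinearMap.adjoint A) (ψ j)) x : ℂ) = inner ℂ (ψ j) (A x) :=
      ContinuousLinearMap.adjoint_inner_left A x (ψ j)
    rw [hψ j h1 h2, inner_add_left, inner_smul_left] at h2'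
    simp only [RingHom.id_apply, starRingEnd_self_apply] at h2'
    linear_combination h2'
  have hA1 : A (φhat 1) = lam • φhat 1 := by
    rw [hφhat1, map_smul, hφ1, smul_comm]
  have hAl : ∀ l, 2 ≤ l → l ≤ L → A (φhat l) = lam • φhat l + φhat (l-1) := by
    intro l h2 hL'
    rw [hφhat l h2 hL', map_sub, hφ l h2 hL', map_smul, hA1]
    module
  have base1 : ∀ j, 1 ≤ j → j ≤ L → (inner ℂ (ψ j) (φhat 1) : ℂ) = if 1 = j then 1 else 0 := by
    intro j h1
    induction j, h1 using Nat.le_induction with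
    | base =>
      intro _
      simp [hφhat1, inner_smul_right, inv_mul_cancel₀ hne]
    | succ n hn ih =>
      intro hj
      have hn' : n ≤ L - 1 := by omega
      rw [step _ n hn hn', hA1, inner_smul_right, ih (by omega)]
      have h1n : ¬ ((1:ℕ) = n+1) := by omega
      simp [h1n]; omega
  have key : ∀ l, 1 ≤ l → l ≤ L → ∀ j, 1 ≤ j → j ≤ L →
      (inner ℂ (ψ j) (φhat l) : ℂ) = if l = j then 1 else 0 := by
    intro l hl
    induction l, hl using Nat.le_induction with
    | base => intro _ j h1 h2; exact base1 j h1 h2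
    | succ n hn ih =>
      intro hnL j hj1 hjL
      have h2 : 2 ≤ n+1 := by omega
      rcases Nat.lt_or_ge j 2 with hj | hj
      · have hj' : j = 1 := by omega
        subst hj'
        rw [hφhat (n+1) h2 hnL, inner_sub_right, inner_smul_right, base1 1 le_rfl (by omega)]
        have : ¬ (n+1 = 1) := by omega
        simp [this]; omega
      · obtain ⟨k, rfl⟩ : ∃ k, j = k + 1 := ⟨j-1, by omega⟩
        have hk1 : 1 ≤ k := by omega
        have hk : k ≤ L - 1 := by omega
        rw [step _ k hk1 hk, hAl (n+1) h2 hnL, inner_add_right, inner_smul_right]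
        simp only [Nat.add_sub_cancel]
        rw [ih (by omega) k hk1 (by omega)]
        by_cases hnk : n = k <;> simp [hnk] <;> ring
  exact fun l j hl hlL hj hjL => key l hl hlL j hj hjL
end

section
/- Let L : ℕ → ℕ with L(k) ≥ 1, and for each k ∈ ℕ and 1 ≤ l ≤ L(k) let φ_{k,l}, ψ_{k,l} ∈ H satisfy: A(φ_{k,1}) = λ_k·φ_{k,1} and A(φ_{k,l}) = λ_k·φ_{k,l} + φ_{k,l−1} for 2 ≤ l ≤ L(k); and the biorthogonality ⟨φ_{k,l}, ψ_{r,s}⟩ = 1 if (k,l) = (r,s) and 0 otherwise, where λ : ℕ → ℂ. Let a be a family of complex coefficients such that the series ∑_{k,l} a_{k,l}·φ_{k,l} converges in H to an element w. Let μ ∈ ℂ satisfy μ ≠ λ_k for every k. If ⟨A(w) − μ·w, ψ_{r,s}⟩ = 0 for every r and every 1 ≤ s ≤ L(r), then a_{k,l} = 0 for all k, l, and hence w = 0. (This is the converse direction of the generalized spectral problem in the case of non-simple spectrum: a solution (μ, f) of Cᵀ ḟ + i μ Cᵀ f = 0 with μ not an eigenvalue forces W^T f = 0.) -/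
/-- converse direction of the generalized spectral problem for
non-simple spectrum: if `w = ∑_{k,l} a_{k,l} φ_{k,l}` in terms of a biorthogonal
Riesz system of Jordan chains `φ_{k,l}` of `A` (with dual family `ψ_{r,s}`),
`μ ≠ λ_k` for all `k`, and `⟨A w − μ w, ψ_{r,s}⟩ = 0` for all admissible `(r,s)`,
then all coefficients vanish and `w = 0`.  The paper's inner product `⟨a, b⟩`
(linear in the first argument) is rendered as Mathlib's `inner b a`. -/
theorem stmt_15 {H : Type*}
    [NormedAddCommGroup H] [InnerProductSpace ℂ H] [CompleteSpace H]
    (A : H →L[ℂ] H)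
    (L : ℕ → ℕ) (hL : ∀ k : ℕ, 1 ≤ L k)
    (lam : ℕ → ℂ)
    (φ ψ : ℕ → ℕ → H)
    (hchain1 : ∀ k : ℕ, A (φ k 1) = lam k • φ k 1)
    (hchain : ∀ k : ℕ, ∀ l : ℕ, 2 ≤ l → l ≤ L k →
      A (φ k l) = lam k • φ k l + φ k (l - 1))
    (hbi : ∀ k l r s : ℕ, 1 ≤ l → l ≤ L k → 1 ≤ s → s ≤ L r →
      (inner ℂ (ψ r s) (φ k l) : ℂ) = if (k, l) = (r, s) then 1 else 0)
    (a : ℕ → ℕ → ℂ) (w : H)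
    (hw : HasSum (fun p : ℕ × ℕ =>
      if 1 ≤ p.2 ∧ p.2 ≤ L p.1 then a p.1 p.2 • φ p.1 p.2 else 0) w)
    (μ : ℂ) (hμ : ∀ k : ℕ, μ ≠ lam k)
    (horth : ∀ r s : ℕ, 1 ≤ s → s ≤ L r → (inner ℂ (ψ r s) (A w - μ • w) : ℂ) = 0) :
    (∀ k l : ℕ, 1 ≤ l → l ≤ L k → a k l = 0) ∧ w = 0 := by
  -- coefficient extraction: ⟨ψ r s, w⟩ = a r s
  have key1 : ∀ r s : ℕ, 1 ≤ s → s ≤ L r → (inner ℂ (ψ r s) w : ℂ) = a r s := by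
    intro r s hs1 hs2
    have h := (innerSL ℂ (ψ r s)).hasSum hw
    have hfe : (fun p : ℕ × ℕ => innerSL ℂ (ψ r s)
        (if 1 ≤ p.2 ∧ p.2 ≤ L p.1 then a p.1 p.2 • φ p.1 p.2 else 0))
        = fun p : ℕ × ℕ => if p = (r, s) then a r s else 0 := by
      funext p
      obtain ⟨k, l⟩ := p
      by_cases hv : 1 ≤ l ∧ l ≤ L k
      · rw [if_pos hv]
        simp only [innerSL_apply_apply]
        rw [inner_smul_right, hbi k l r s hv.1 hv.2 hs1 hs2]
        by_cases he : ((k, l) : ℕ × ℕ) = (r, s)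
        · obtain ⟨rfl, rfl⟩ := Prod.mk.inj he
          rw [if_pos rfl, if_pos rfl, mul_one]
        · rw [if_neg he, if_neg he, mul_zero]
      · rw [if_neg hv]
        simp only [innerSL_apply_apply]
        rw [inner_zero_right, if_neg]
        intro he
        obtain ⟨rfl, rfl⟩ := Prod.mk.inj he
        exact hv ⟨hs1, hs2⟩
    rw [hfe] at h
    exact h.unique (hasSum_ite_eq (r, s) (a r s))
  -- ⟨ψ r s, A w⟩ = lam r * a r s + (next term)
  have key2 : ∀ r s : ℕ, 1 ≤ s → s ≤ L r →
      (inner ℂ (ψ r s) (A w) : ℂ)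
        = lam r * a r s + (if s + 1 ≤ L r then a r (s + 1) else 0) := by
    intro r s hs1 hs2
    have h := (innerSL ℂ (ψ r s)).hasSum (A.hasSum hw)
    have hfe : (fun p : ℕ × ℕ => innerSL ℂ (ψ r s)
        (A (if 1 ≤ p.2 ∧ p.2 ≤ L p.1 then a p.1 p.2 • φ p.1 p.2 else 0)))
        = fun p : ℕ × ℕ =>
          (if p = (r, s) then lam r * a r s else 0)
          + (if p = (r, s + 1) then (if s + 1 ≤ L r then a r (s + 1) else 0) else 0) := by
      funext p
      obtain ⟨k, l⟩ := p
      by_cases hv : 1 ≤ l ∧ l ≤ L k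
      · rw [if_pos hv]
        simp only [innerSL_apply_apply]
        rw [map_smul, inner_smul_right]
        rcases eq_or_lt_of_le hv.1 with h1 | h2
        · -- l = 1
          have hl1 : l = 1 := h1.symm
          subst hl1
          rw [hchain1 k, inner_smul_right, hbi k 1 r s hv.1 hv.2 hs1 hs2]
          have hne2 : ((k, 1) : ℕ × ℕ) ≠ (r, s + 1) := by
            intro he2
            obtain ⟨rfl, h1s⟩ := Prod.mk.inj he2
            omega
          rw [if_neg hne2, add_zero]
          by_cases he : ((k, 1) : ℕ × ℕ) = (r, s)
          · obtain ⟨rfl, rfl⟩ := Prod.mk.inj he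
            rw [if_pos rfl, if_pos rfl, mul_one]
            ring
          · rw [if_neg he, if_neg he, mul_zero, mul_zero]
        · -- 2 ≤ l
          have hl2 : 2 ≤ l := h2
          rw [hchain k l hl2 hv.2, inner_add_right, inner_smul_right,
            hbi k l r s hv.1 hv.2 hs1 hs2,
            hbi k (l - 1) r s (by omega) (by omega) hs1 hs2]
          by_cases he : ((k, l) : ℕ × ℕ) = (r, s)
          · obtain ⟨rfl, rfl⟩ := Prod.mk.inj he
            have hne2 : ((k, l) : ℕ × ℕ) ≠ (k, l + 1) := by
              intro he2; obtain ⟨-, h1s⟩ := Prod.mk.inj he2; omega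
            have hne3 : ((k, l - 1) : ℕ × ℕ) ≠ (k, l) := by
              intro he3; obtain ⟨-, h1s⟩ := Prod.mk.inj he3; omega
            rw [if_pos rfl, if_pos rfl, if_neg hne3, if_neg hne2]
            ring
          · rw [if_neg he, if_neg he]
            by_cases he2 : ((k, l - 1) : ℕ × ℕ) = (r, s)
            · obtain ⟨rfl, hls⟩ := Prod.mk.inj he2
              have hl : l = s + 1 := by omega
              subst hl
              rw [if_pos he2]
              simp only [if_pos rfl, if_true, if_pos hv.2]
              ring
            · rw [if_neg he2, if_neg (by
                intro he3
                obtain ⟨rfl, rfl⟩ := Prod.mk.inj he3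
                exact he2 (by simp))]
              ring
      · rw [if_neg hv]
        simp only [innerSL_apply_apply]
        rw [map_zero, inner_zero_right,
          if_neg (fun he => by obtain ⟨rfl, rfl⟩ := Prod.mk.inj he; exact hv ⟨hs1, hs2⟩)]
        by_cases he2 : ((k, l) : ℕ × ℕ) = (r, s + 1)
        · obtain ⟨rfl, rfl⟩ := Prod.mk.inj he2
          rw [if_pos rfl, if_neg (fun h => hv ⟨by omega, h⟩)]
          ring
        · rw [if_neg he2]; ring
    rw [hfe] at h
    have hs : HasSum (fun p : ℕ × ℕ =>
        (if p = (r, s) then lam r * a r s else 0)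
        + (if p = (r, s + 1) then (if s + 1 ≤ L r then a r (s + 1) else 0) else 0))
        (lam r * a r s + (if s + 1 ≤ L r then a r (s + 1) else 0)) :=
      (hasSum_ite_eq (r, s) _).add (hasSum_ite_eq (r, s + 1) _)
    exact h.unique hs
  -- the recurrence
  have hrec : ∀ r s : ℕ, 1 ≤ s → s ≤ L r →
      (lam r - μ) * a r s + (if s + 1 ≤ L r then a r (s + 1) else 0) = 0 := by
    intro r s hs1 hs2
    have h := horth r s hs1 hs2
    rw [inner_sub_right, inner_smul_right, key1 r s hs1 hs2, key2 r s hs1 hs2] at h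
    linear_combination h
  have hne : ∀ r : ℕ, lam r - μ ≠ 0 := fun r => sub_ne_zero.mpr (Ne.symm (hμ r))
  -- downward induction
  have main : ∀ d : ℕ, ∀ r s : ℕ, 1 ≤ s → s ≤ L r → L r - s ≤ d → a r s = 0 := by
    intro d
    induction d with
    | zero =>
      intro r s hs1 hs2 hd
      have hs : ¬ s + 1 ≤ L r := by omega
      have h := hrec r s hs1 hs2
      rw [if_neg hs, add_zero] at h
      exact (mul_eq_zero.mp h).resolve_left (hne r)
    | succ d ih =>
      intro r s hs1 hs2 hd
      by_cases hs : s + 1 ≤ L r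
      · have h := hrec r s hs1 hs2
        rw [if_pos hs, ih r (s + 1) (by omega) hs (by omega), add_zero] at h
        exact (mul_eq_zero.mp h).resolve_left (hne r)
      · have h := hrec r s hs1 hs2
        rw [if_neg hs, add_zero] at h
        exact (mul_eq_zero.mp h).resolve_left (hne r)
  have hall : ∀ k l : ℕ, 1 ≤ l → l ≤ L k → a k l = 0 :=
    fun k l h1 h2 => main (L k - l) k l h1 h2 le_rfl
  refine ⟨hall, ?_⟩
  have hz : (fun p : ℕ × ℕ =>
      if 1 ≤ p.2 ∧ p.2 ≤ L p.1 then a p.1 p.2 • φ p.1 p.2 else 0) = fun _ => (0 : H) := by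
    funext p
    by_cases hv : 1 ≤ p.2 ∧ p.2 ≤ L p.1
    · rw [if_pos hv, hall p.1 p.2 hv.1 hv.2, zero_smul]
    · rw [if_neg hv]
  rw [hz] at hw
  exact hw.unique hasSum_zero
end
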